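/- Let η > 1 be the real number satisfying (1 − 2^{-η}) ζ(η) = 2, where ζ is the Riemann zeta function (η = 1.37779…). Then for every odd integer n ≥ 3, the number of ordered factorizations H(n) satisfies H(n) ≤ n^η. -/

import Mathlib

/-- Product of a list of naturals each `≥ 2` is at least `2 ^ length`. -/
lemma two_pow_le_prod (l : List ℕ) (h : ∀ d ∈ l, 2 ≤ d) : 2 ^ l.length ≤ l.prod := by
  induction l with
  | nil => simp
  | cons a t ih =>
    simp only [List.length_cons, List.prod_cons, pow_succ]
    have ha := h a (by simp)
    have ht := ih (fun d hd => h d (by simp [hd]))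
    calc 2 ^ t.length * 2 ≤ t.prod * a := Nat.mul_le_mul ht ha
    _ = a * t.prod := Nat.mul_comm _ _

/-- The set of ordered factorizations of `n` is finite. -/
lemma Sfin (n : ℕ) : {l : List ℕ | (∀ d ∈ l, 2 ≤ d) ∧ l.prod = n}.Finite := by
  rcases Nat.eq_zero_or_pos n with rfl | hn
  · convert Set.finite_empty
    ext l
    simp only [Set.mem_setOf_eq, Set.mem_empty_iff_false, iff_false, not_and]
    intro h2 hp
    have : 0 < l.prod := List.prod_pos (fun a ha => lt_of_lt_of_le two_pos (h2 a ha))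
    omega
  · apply Set.Finite.subset ((List.finite_length_le (Fin (n+1)) n).image (List.map Fin.val))
    rintro l ⟨h2, hp⟩
    have hlen : l.length ≤ n := by
      have h1 := two_pow_le_prod l h2
      have h3 := Nat.lt_two_pow_self (n := l.length)
      omega
    have hmem : ∀ d ∈ l, d < n + 1 := by
      intro d hd
      have : d ∣ n := hp ▸ List.dvd_prod hd
      have := Nat.le_of_dvd hn this
      omega
    refine ⟨l.attach.map (fun d => (⟨d.1, hmem d.1 d.2⟩ : Fin (n+1))), by simp [hlen], ?_⟩
    simp [List.map_map, Function.comp]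

/-- `Hfac n` is the number of ordered factorizations of `n`, i.e. the number of finite
sequences `(d_1, …, d_k)` with each `d_i ≥ 2` and product `n`. -/
noncomputable def Hfac (n : ℕ) : ℕ :=
  Nat.card {l : List ℕ // (∀ d ∈ l, 2 ≤ d) ∧ l.prod = n}

lemma eq_nil_of_prod_one {l : List ℕ} (h2 : ∀ d ∈ l, 2 ≤ d) (hp : l.prod = 1) : l = [] := by
  cases l with
  | nil => rfl
  | cons a t =>
    have ha := h2 a (by simp)
    have : a ∣ (1:ℕ) := by rw [← hp]; exact List.dvd_prod (by simp)
    have := Nat.le_of_dvd one_pos this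
    omega

lemma Hfac_one : Hfac 1 = 1 := by
  rw [Hfac, Nat.card_eq_one_iff_unique]
  refine ⟨⟨fun a b => ?_⟩, ⟨⟨[], by simp⟩⟩⟩
  obtain ⟨l, hl⟩ := a
  obtain ⟨l', hl'⟩ := b
  have h1 := eq_nil_of_prod_one hl.1 hl.2
  have h2 := eq_nil_of_prod_one hl'.1 hl'.2
  subst h1 h2; rfl

/-- Head-tail decomposition of ordered factorizations. -/
noncomputable def facEquiv (n : ℕ) (hn : 2 ≤ n) :
    (Σ d : {d : ℕ // d ∈ n.divisors.filter (fun d => 2 ≤ d)},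
      {l : List ℕ // (∀ e ∈ l, 2 ≤ e) ∧ l.prod = n / d.1}) ≃
    {l : List ℕ // (∀ d ∈ l, 2 ≤ d) ∧ l.prod = n} := by
  refine Equiv.ofBijective (fun x => ⟨x.2.1.cons x.1.1, ?_, ?_⟩) ⟨?_, ?_⟩
  · intro e he
    rcases List.mem_cons.mp he with rfl | he'
    · exact (Finset.mem_filter.mp x.1.2).2
    · exact x.2.2.1 e he'
  · have hd := Finset.mem_filter.mp x.1.2
    have hdvd : x.1.1 ∣ n := (Nat.mem_divisors.mp hd.1).1
    simp only [List.prod_cons, x.2.2.2]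
    exact Nat.mul_div_cancel' hdvd
  · rintro ⟨⟨d, hd⟩, ⟨l, hl⟩⟩ ⟨⟨d', hd'⟩, ⟨l', hl'⟩⟩ h
    simp only [Subtype.mk.injEq, List.cons.injEq] at h
    obtain ⟨rfl, rfl⟩ := h
    rfl
  · rintro ⟨l, h2, hp⟩
    cases l with
    | nil => simp at hp; omega
    | cons a t =>
      have ha2 := h2 a (by simp)
      have hprod : a * t.prod = n := by simpa using hp
      have hdvd : a ∣ n := ⟨t.prod, hprod.symm⟩
      have hane : n ≠ 0 := by omega
      refine ⟨⟨⟨a, Finset.mem_filter.mpr ⟨Nat.mem_divisors.mpr ⟨hdvd, hane⟩, ha2⟩⟩,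
        ⟨t, fun e he => h2 e (by simp [he]), ?_⟩⟩, rfl⟩
      show t.prod = n / a
      rw [← hprod, Nat.mul_div_cancel_left _ (by omega)]

/-- The recursion `H(n) = ∑_{d ∣ n, d ≥ 2} H(n/d)` for `n ≥ 2`. -/
lemma Hfac_rec (n : ℕ) (hn : 2 ≤ n) :
    Hfac n = ∑ d ∈ n.divisors.filter (fun d => 2 ≤ d), Hfac (n / d) := by
  haveI : ∀ m : ℕ, Finite {l : List ℕ // (∀ e ∈ l, 2 ≤ e) ∧ l.prod = m} :=
    fun m => (Sfin m).to_subtype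
  rw [Hfac, ← Nat.card_congr (facEquiv n hn)]
  haveI : ∀ d : {d : ℕ // d ∈ n.divisors.filter (fun d => 2 ≤ d)},
      Fintype {l : List ℕ // (∀ e ∈ l, 2 ≤ e) ∧ l.prod = n / d.1} :=
    fun d => Fintype.ofFinite _
  rw [Nat.card_eq_fintype_card, Fintype.card_sigma]
  rw [← Finset.sum_coe_sort (n.divisors.filter (fun d => 2 ≤ d)) (fun d => Hfac (n / d))]
  congr 1
  ext d
  rw [Hfac, Nat.card_eq_fintype_card]

/-- The analytic input: the sum of `m ^ (-η)` over odd `m ≥ 3` equals `1`. -/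
lemma tsum_odd_ge_three (η : ℝ) (hη : 1 < η)
    (hzeta : (1 - (2 : ℝ) ^ (-η)) * ∑' m : ℕ, (m : ℝ) ^ (-η) = 2) :
    ∑' m : ℕ, (if Odd m ∧ 3 ≤ m then (m : ℝ) ^ (-η) else 0) = 1 := by
  have hsum : Summable (fun m : ℕ => (m : ℝ) ^ (-η)) :=
    Real.summable_nat_rpow.mpr (by linarith)
  have hinj2 : Function.Injective (fun k : ℕ => 2 * k) := fun a b h => by
    simp only [] at h; omega
  have hinj2' : Function.Injective (fun k : ℕ => 2 * k + 1) := fun a b h => by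
    simp only [] at h; omega
  have he : Summable (fun k : ℕ => ((2 * k : ℕ) : ℝ) ^ (-η)) := by
    have := hsum.comp_injective hinj2
    simpa [Function.comp_def] using this
  have ho : Summable (fun k : ℕ => ((2 * k + 1 : ℕ) : ℝ) ^ (-η)) := by
    have := hsum.comp_injective hinj2'
    simpa [Function.comp_def] using this
  have hsplit := tsum_even_add_odd (f := fun m : ℕ => (m:ℝ)^(-η)) he ho
  have heval : ∑' k : ℕ, ((2 * k : ℕ) : ℝ) ^ (-η)
      = (2:ℝ) ^ (-η) * ∑' m : ℕ, (m : ℝ) ^ (-η) := by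
    rw [← tsum_mul_left]
    congr 1
    ext k
    push_cast
    rw [Real.mul_rpow (by norm_num) (Nat.cast_nonneg k)]
  have hodd : ∑' k : ℕ, ((2 * k + 1 : ℕ) : ℝ) ^ (-η) = 2 := by
    rw [heval] at hsplit
    nlinarith [hsplit, hzeta]
  -- now g
  set g : ℕ → ℝ := fun m => if Odd m then (m : ℝ) ^ (-η) else 0 with hg
  have hge : Summable (fun k : ℕ => g (2 * k)) := by
    have : (fun k : ℕ => g (2 * k)) = fun _ => 0 := by
      ext k; simp [hg, Nat.odd_iff]
    rw [this]; exact summable_zero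
  have hgo : (fun k : ℕ => g (2 * k + 1)) = fun k : ℕ => ((2 * k + 1 : ℕ) : ℝ) ^ (-η) := by
    ext k
    simp [hg, Nat.odd_iff]
  have hgsum : Summable g := by
    apply Summable.even_add_odd (f := g) hge
    rw [hgo]; exact ho
  have hgt : ∑' m, g m = 2 := by
    rw [← tsum_even_add_odd (f := g) hge (by rw [hgo]; exact ho), hgo, hodd]
    have : ∑' k : ℕ, g (2 * k) = 0 := by
      have : (fun k : ℕ => g (2 * k)) = fun _ => 0 := by
        ext k; simp [hg, Nat.odd_iff]
      rw [this, tsum_zero]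
    rw [this, zero_add]
  have hkey := Summable.tsum_eq_add_tsum_ite hgsum 1
  have hfg : (fun m : ℕ => if m = 1 then 0 else g m)
      = fun m : ℕ => if Odd m ∧ 3 ≤ m then (m : ℝ) ^ (-η) else 0 := by
    ext m
    by_cases h1 : m = 1
    · subst h1; simp
    · simp only [if_neg h1, hg]
      by_cases ho' : Odd m
      · have : 3 ≤ m := by rcases ho' with ⟨k, hk⟩; omega
        simp [ho', this]
      · simp [ho']
  rw [hfg] at hkey
  have : g 1 = 1 := by simp [hg, Real.one_rpow]
  rw [hgt, this] at hkey
  linarith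

theorem stmt3 (η : ℝ) (hη : 1 < η)
    (hzeta : (1 - (2 : ℝ) ^ (-η)) * ∑' m : ℕ, (m : ℝ) ^ (-η) = 2) :
    ∀ n : ℕ, 3 ≤ n → Odd n → (Hfac n : ℝ) ≤ (n : ℝ) ^ η := by
  have hsum : Summable (fun m : ℕ => (m : ℝ) ^ (-η)) :=
    Real.summable_nat_rpow.mpr (by linarith)
  have htsum1 := tsum_odd_ge_three η hη hzeta
  set f : ℕ → ℝ := fun m => if Odd m ∧ 3 ≤ m then (m : ℝ) ^ (-η) else 0 with hfdef
  have hfnonneg : ∀ m, 0 ≤ f m := by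
    intro m
    by_cases h : Odd m ∧ 3 ≤ m <;>
      simp [hfdef, h, Real.rpow_nonneg (Nat.cast_nonneg m)]
  have hfle : ∀ m, f m ≤ (m : ℝ) ^ (-η) := by
    intro m
    by_cases h : Odd m ∧ 3 ≤ m <;>
      simp [hfdef, h, Real.rpow_nonneg (Nat.cast_nonneg m)]
  have hfsum : Summable f := Summable.of_nonneg_of_le hfnonneg hfle hsum
  have main : ∀ n : ℕ, Odd n → 1 ≤ n → (Hfac n : ℝ) ≤ (n : ℝ) ^ η := by
    intro n
    induction n using Nat.strong_induction_on with
    | _ n ih =>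
      intro hodd hpos
      rcases eq_or_lt_of_le hpos with h1 | h1
      · rw [← h1]
        simp [Hfac_one, Real.one_rpow]
      · have hn2 : 2 ≤ n := h1
        rw [Hfac_rec n hn2]
        push_cast
        have step : ∀ d ∈ n.divisors.filter (fun d => 2 ≤ d),
            (Hfac (n / d) : ℝ) ≤ (n:ℝ)^η * f d := by
          intro d hd
          obtain ⟨hdvd', hd2⟩ := Finset.mem_filter.mp hd
          obtain ⟨hdvd, hn0⟩ := Nat.mem_divisors.mp hdvd'
          have hddodd : Odd d := Odd.of_dvd_nat hodd hdvd
          have hd3 : 3 ≤ d := by rcases hddodd with ⟨k, hk⟩; omega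
          have hqodd : Odd (n / d) := Odd.of_dvd_nat hodd (Nat.div_dvd_of_dvd hdvd)
          have hqpos : 1 ≤ n / d := Nat.div_pos (Nat.le_of_dvd (by omega) hdvd) (by omega)
          have hqlt : n / d < n := Nat.div_lt_self (by omega) hd2
          have hIH := ih (n/d) hqlt hqodd hqpos
          have hcast : ((n / d : ℕ) : ℝ) = (n : ℝ) / d :=
            Nat.cast_div hdvd (by positivity)
          calc (Hfac (n/d):ℝ) ≤ ((n/d:ℕ):ℝ)^η := hIH
          _ = ((n:ℝ)/d)^η := by rw [hcast]
          _ = (n:ℝ)^η * (d:ℝ)^(-η) := by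
              rw [Real.div_rpow (Nat.cast_nonneg n) (Nat.cast_nonneg d),
                Real.rpow_neg (Nat.cast_nonneg d), div_eq_mul_inv]
          _ = (n:ℝ)^η * f d := by rw [hfdef]; simp [hddodd, hd3]
        calc ∑ d ∈ n.divisors.filter (fun d => 2 ≤ d), (Hfac (n/d):ℝ)
            ≤ ∑ d ∈ n.divisors.filter (fun d => 2 ≤ d), (n:ℝ)^η * f d :=
              Finset.sum_le_sum step
        _ = (n:ℝ)^η * ∑ d ∈ n.divisors.filter (fun d => 2 ≤ d), f d := by
              rw [Finset.mul_sum]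
        _ ≤ (n:ℝ)^η * 1 := by
              apply mul_le_mul_of_nonneg_left _ (Real.rpow_nonneg (Nat.cast_nonneg n) η)
              rw [← htsum1]
              exact Summable.sum_le_tsum _ (fun m _ => hfnonneg m) hfsum
        _ = (n:ℝ)^η := mul_one _
  intro n h3 hodd
  exact main n hodd (by omega)
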